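/- Let w : ℝ → ℝ be twice continuously differentiable and nonvanishing on ℝ ∖ {0}, and suppose it satisfies the basic functional equation (w′(s)/w(s) + w′(t)/w(t))·w(s+t) + w(s)·w(t) = 0 for all real s, t with s ≠ 0, t ≠ 0 and s + t ≠ 0. Then w also satisfies the second functional equation (w″(s)/(2·w(s)) − w″(t)/(2·w(t)))·w(s+t) = w(s)·w′(t) − w′(s)·w(t) for all real s, t with s ≠ 0, t ≠ 0 and s + t ≠ 0. (The second equation is obtained from the first by differentiating with respect to s and to t and subtracting the results.) -/

import Mathlib

theorem stmt_18 (w w' w'' : ℝ → ℝ)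
    (hd1 : ∀ t : ℝ, t ≠ 0 → HasDerivAt w (w' t) t)
    (hd2 : ∀ t : ℝ, t ≠ 0 → HasDerivAt w' (w'' t) t)
    (hcont : ContinuousOn w'' {t : ℝ | t ≠ 0})
    (hnz : ∀ t : ℝ, t ≠ 0 → w t ≠ 0)
    (heq : ∀ s t : ℝ, s ≠ 0 → t ≠ 0 → s + t ≠ 0 →
      (w' s / w s + w' t / w t) * w (s + t) + w s * w t = 0) :
    ∀ s t : ℝ, s ≠ 0 → t ≠ 0 → s + t ≠ 0 →
      (w'' s / (2 * w s) - w'' t / (2 * w t)) * w (s + t) = w s * w' t - w' s * w t := by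
  intro s t hs ht hst
  have ha := hnz s hs
  have hb := hnz t ht
  have hc := hnz (s + t) hst
  -- derivative of w'/w
  have hdu : ∀ x : ℝ, x ≠ 0 →
      HasDerivAt (fun y => w' y / w y)
        ((w'' x * w x - w' x * w' x) / w x ^ 2) x := by
    intro x hx
    exact (hd2 x hx).div (hd1 x hx) (hnz x hx)
  -- derivative of y ↦ w (y + t) at s
  have hws : HasDerivAt (fun y => w (y + t)) (w' (s + t)) s := by
    have := (hd1 (s + t) hst).comp s ((hasDerivAt_id s).add_const t)
    simpa [Function.comp_def] using this
  -- derivative of y ↦ w (s + y) at t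
  have hwt : HasDerivAt (fun y => w (s + y)) (w' (s + t)) t := by
    have := (hd1 (s + t) hst).comp t ((hasDerivAt_id t).const_add s)
    simpa [Function.comp_def] using this
  -- F s derivative
  have hF : HasDerivAt (fun y => (w' y / w y + w' t / w t) * w (y + t) + w y * w t)
      ((w'' s * w s - w' s * w' s) / w s ^ 2 * w (s + t)
        + (w' s / w s + w' t / w t) * w' (s + t) + w' s * w t) s := by
    exact (((hdu s hs).add_const (w' t / w t)).mul hws).add ((hd1 s hs).mul_const (w t))
  have hG : HasDerivAt (fun y => (w' s / w s + w' y / w y) * w (s + y) + w s * w y)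
      ((w'' t * w t - w' t * w' t) / w t ^ 2 * w (s + t)
        + (w' s / w s + w' t / w t) * w' (s + t) + w s * w' t) t := by
    exact (((hdu t ht).const_add (w' s / w s)).mul hwt).add ((hd1 t ht).const_mul (w s))
  -- locally zero
  have hFz : (fun y => (w' y / w y + w' t / w t) * w (y + t) + w y * w t)
      =ᶠ[nhds s] (fun _ => (0:ℝ)) := by
    have h1 : ∀ᶠ x in nhds s, x ≠ 0 := eventually_ne_nhds hs
    have h2 : ∀ᶠ x in nhds s, x + t ≠ 0 := by
      have htend : Filter.Tendsto (fun x : ℝ => x + t) (nhds s) (nhds (s + t)) :=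
        ((continuous_id.add continuous_const).tendsto s)
      exact htend.eventually (eventually_ne_nhds hst)
    filter_upwards [h1, h2] with x hx hxt
    exact heq x t hx ht hxt
  have hGz : (fun y => (w' s / w s + w' y / w y) * w (s + y) + w s * w y)
      =ᶠ[nhds t] (fun _ => (0:ℝ)) := by
    have h1 : ∀ᶠ x in nhds t, x ≠ 0 := eventually_ne_nhds ht
    have h2 : ∀ᶠ x in nhds t, s + x ≠ 0 := by
      have htend : Filter.Tendsto (fun x : ℝ => s + x) (nhds t) (nhds (s + t)) :=
        ((continuous_const.add continuous_id).tendsto t)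
      exact htend.eventually (eventually_ne_nhds hst)
    filter_upwards [h1, h2] with x hx hxt
    exact heq s x hs hx hxt
  have E1 : (w'' s * w s - w' s * w' s) / w s ^ 2 * w (s + t)
        + (w' s / w s + w' t / w t) * w' (s + t) + w' s * w t = 0 :=
    (hF.congr_of_eventuallyEq hFz.symm).unique (hasDerivAt_const s 0)
  have E2 : (w'' t * w t - w' t * w' t) / w t ^ 2 * w (s + t)
        + (w' s / w s + w' t / w t) * w' (s + t) + w s * w' t = 0 :=
    (hG.congr_of_eventuallyEq hGz.symm).unique (hasDerivAt_const t 0)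
  have E0 := heq s t hs ht hst
  field_simp at E0 E1 E2 ⊢
  have key : (w s)^2 * (w t)^2 *
      ((w'' s * (2 * w t) - 2 * w s * w'' t) * w (s + t)
        - (w s * w' t - w' s * w t) * (2 * w s * (2 * w t))) = 0 := by
    linear_combination 2 * w s * (w t)^2 * E1 - 2 * (w s)^2 * w t * E2
      + 2 * (w s * w t) * (w' s * w t - w' t * w s) * E0
  have h3 : (w s)^2 * (w t)^2 ≠ 0 :=
    mul_ne_zero (pow_ne_zero _ ha) (pow_ne_zero _ hb)
  have h4 := (mul_eq_zero.mp key).resolve_left h3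
  linarith
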